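/- Let s², δ, P̄, Q, 𝕹 be strictly positive reals, let X be a real random variable with the exponential distribution of mean s² (density (1/s²)e^{−x/s²} on [0,∞)), and set ρ = 𝕹/(δ²·P̄·s²). Then for every α ∈ [0,1), E[ ln( δ⁴X²·P̄·Q·(1−α)² + 𝕹·δ²·X·(P̄ + α²Q) ) ] = E[ln X] + ln(𝕹 δ² Q) + ln(P̄/Q + α²) + e^{κ(α)} · E₁(κ(α)), where κ(α) = ρ·(P̄/Q + α²)/(1−α)² and E₁(z) = ∫_z^∞ t^{−1} e^{−t} dt. In particular, minimizing the left-hand side over α ∈ [0,1) is equivalent to minimizing ln(P̄/Q + α²) + e^{κ(α)} E₁(κ(α)). -/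

import Mathlib

open MeasureTheory ProbabilityTheory

section Aux
open Real Set Filter Topology
open scoped NNReal ENNReal

private lemma Ipdf' {r : ℝ} (hr : 0 < r) :
    IntegrableOn (fun x => r * Real.exp (-(r * x))) (Ioi (0:ℝ)) := by
  simpa [neg_mul, IntegrableOn] using (exp_neg_integrableOn_Ioi 0 hr).const_mul r

private lemma Ix' {r : ℝ} (hr : 0 < r) :
    IntegrableOn (fun x => x * Real.exp (-(r * x))) (Ioi (0:ℝ)) := by
  simpa [Real.rpow_one, neg_mul] using
    integrableOn_rpow_mul_exp_neg_mul_rpow (p := 1) (s := 1) (by norm_num) (by norm_num) hr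

private lemma logbound' {c : ℝ} (hc : 0 < c) {x : ℝ} (hx : 0 < x) :
    |Real.log (x + c)| ≤ |Real.log c| + x / c := by
  have h1 : Real.log c ≤ Real.log (x + c) := Real.log_le_log hc (by linarith)
  have h2 : Real.log (x + c) - Real.log c ≤ x / c := by
    have := Real.log_le_sub_one_of_pos (x := (x + c) / c) (by positivity)
    rw [Real.log_div (by linarith) hc.ne'] at this
    calc Real.log (x + c) - Real.log c ≤ (x + c) / c - 1 := this
    _ = x / c := by field_simp; ring
  have h3 := neg_abs_le (Real.log c)
  have h4 := le_abs_self (Real.log c)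
  rw [abs_le]
  constructor <;> nlinarith [div_nonneg hx.le hc.le]

private lemma Ilogshift' {r c : ℝ} (hr : 0 < r) (hc : 0 < c) :
    IntegrableOn (fun x => Real.log (x + c) * (r * Real.exp (-(r * x)))) (Ioi (0:ℝ)) := by
  have hg : IntegrableOn (fun x => (|Real.log c| + x / c) * (r * Real.exp (-(r * x))))
      (Ioi (0:ℝ)) := by
    have := ((Ipdf' hr).const_mul |Real.log c|).add (((Ix' hr).const_mul (r / c)))
    exact this.congr (ae_of_all _ fun x => by simp only [Pi.add_apply]; ring)
  refine Integrable.mono' hg ?_ ?_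
  · exact (((Real.measurable_log.comp (measurable_id.add_const c)).mul
      ((measurable_id.const_mul r).neg.exp.const_mul r))).aestronglyMeasurable
  · refine (ae_restrict_iff' measurableSet_Ioi).2 (ae_of_all _ fun x hx => ?_)
    rw [norm_mul, Real.norm_eq_abs, Real.norm_eq_abs]
    have h1 : |r * Real.exp (-(r * x))| = r * Real.exp (-(r * x)) := abs_of_pos (by positivity)
    rw [h1]
    exact mul_le_mul_of_nonneg_right (logbound' hc hx) (by positivity)

private lemma Iinvshift' {r c : ℝ} (hr : 0 < r) (hc : 0 < c) :
    IntegrableOn (fun x => Real.exp (-(r * x)) * (x + c)⁻¹) (Ioi (0:ℝ)) := by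
  have hg : IntegrableOn (fun x => c⁻¹ * (r * Real.exp (-(r * x))) / r) (Ioi (0:ℝ)) :=
    ((Ipdf' hr).const_mul c⁻¹).div_const r
  refine Integrable.mono' hg ?_ ?_
  · exact (((measurable_id.const_mul r).neg.exp).mul
      ((measurable_id.add_const c).inv)).aestronglyMeasurable
  · refine (ae_restrict_iff' measurableSet_Ioi).2 (ae_of_all _ fun x hx => ?_)
    have hxc : (0:ℝ) < x + c := by simp at hx; linarith
    rw [norm_mul, Real.norm_eq_abs, Real.norm_eq_abs, abs_of_pos (Real.exp_pos _),
      abs_of_pos (inv_pos.2 hxc)]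
    have : c⁻¹ * (r * Real.exp (-(r * x))) / r = Real.exp (-(r*x)) * c⁻¹ := by
      field_simp
    rw [this]
    exact mul_le_mul_of_nonneg_left
      (inv_anti₀ hc (by have hx0 : (0:ℝ) < x := hx; linarith)) (Real.exp_pos _).le

private lemma Ilogpdf' {r : ℝ} (hr : 0 < r) :
    IntegrableOn (fun x => Real.log x * (r * Real.exp (-(r * x)))) (Ioi (0:ℝ)) := by
  have hmeas : AEStronglyMeasurable (fun x => Real.log x * (r * Real.exp (-(r * x))))
      (volume.restrict (Ioi (0:ℝ))) :=
    (Real.measurable_log.mul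
      ((measurable_id.const_mul r).neg.exp.const_mul r)).aestronglyMeasurable
  rw [show Ioi (0:ℝ) = Ioc (0:ℝ) 1 ∪ Ioi 1 from (Ioc_union_Ioi_eq_Ioi zero_le_one).symm]
  refine IntegrableOn.union ?_ ?_
  · have hrpow : IntegrableOn (fun x : ℝ => r * (2 * x ^ (-(1:ℝ)/2))) (Ioc (0:ℝ) 1) := by
      have : IntervalIntegrable (fun x : ℝ => x ^ (-(1:ℝ)/2)) volume 0 1 :=
        intervalIntegral.intervalIntegrable_rpow' (by norm_num)
      rw [intervalIntegrable_iff_integrableOn_Ioc_of_le zero_le_one] at this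
      exact (this.const_mul 2).const_mul r
    refine Integrable.mono' hrpow
      (hmeas.mono_measure (Measure.restrict_mono Ioc_subset_Ioi_self le_rfl)) ?_
    refine (ae_restrict_iff' measurableSet_Ioc).2 (ae_of_all _ fun x hx => ?_)
    obtain ⟨hx0, hx1⟩ := hx
    have hlog : |Real.log x| ≤ 2 * x ^ (-(1:ℝ)/2) := by
      have hxlog : Real.log x ≤ 0 := Real.log_nonpos hx0.le hx1
      rw [abs_of_nonpos hxlog]
      have h5 : Real.log (x ^ (-(1:ℝ)/2)) ≤ x ^ (-(1:ℝ)/2) - 1 :=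
        Real.log_le_sub_one_of_pos (Real.rpow_pos_of_pos hx0 _)
      rw [Real.log_rpow hx0] at h5
      have : (0:ℝ) < x ^ (-(1:ℝ)/2) := Real.rpow_pos_of_pos hx0 _
      nlinarith
    rw [norm_mul, Real.norm_eq_abs, Real.norm_eq_abs,
      abs_of_pos (show (0:ℝ) < r * Real.exp (-(r*x)) by positivity)]
    calc |Real.log x| * (r * Real.exp (-(r * x))) ≤ (2 * x ^ (-(1:ℝ)/2)) * (r * 1) := by
          refine mul_le_mul hlog ?_ (by positivity) (by positivity)
          exact mul_le_mul_of_nonneg_left (Real.exp_le_one_iff.2 (by nlinarith)) hr.le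
      _ = r * (2 * x ^ (-(1:ℝ)/2)) := by ring
  · have hg : IntegrableOn (fun x : ℝ => r * (x * Real.exp (-(r * x)))) (Ioi (1:ℝ)) :=
      (((Ix' hr).mono_set (Ioi_subset_Ioi zero_le_one)).const_mul r)
    refine Integrable.mono' hg
      (hmeas.mono_measure (Measure.restrict_mono (Ioi_subset_Ioi zero_le_one) le_rfl)) ?_
    refine (ae_restrict_iff' measurableSet_Ioi).2 (ae_of_all _ fun x hx => ?_)
    simp only [mem_Ioi] at hx
    have hlog : |Real.log x| ≤ x := by
      rw [abs_of_nonneg (Real.log_nonneg hx.le)]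
      linarith [Real.log_le_sub_one_of_pos (show (0:ℝ) < x by linarith)]
    rw [norm_mul, Real.norm_eq_abs, Real.norm_eq_abs,
      abs_of_pos (show (0:ℝ) < r * Real.exp (-(r*x)) by positivity)]
    calc |Real.log x| * (r * Real.exp (-(r * x))) ≤ x * (r * Real.exp (-(r*x))) :=
          mul_le_mul_of_nonneg_right hlog (by positivity)
      _ = r * (x * Real.exp (-(r * x))) := by ring

private lemma integral_pdf_one' {r : ℝ} (hr : 0 < r) :
    ∫ x in Ioi (0:ℝ), r * Real.exp (-(r * x)) = 1 := by
  have hderiv : ∀ x ∈ Ici (0:ℝ), HasDerivAt (fun a => -Real.exp (-(r * a)))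
      (r * Real.exp (-(r * x))) x := fun x _ => ProbabilityTheory.hasDerivAt_neg_exp_mul_exp
  have htend : Tendsto (fun a => -Real.exp (-(r * a))) atTop (nhds 0) := by
    rw [show (0:ℝ) = -0 by ring]
    refine Tendsto.neg (Real.tendsto_exp_atBot.comp ?_)
    simpa [neg_mul] using
      (tendsto_id.const_mul_atTop hr).const_mul_atTop_of_neg (by norm_num : (-1:ℝ) < 0)
  have := integral_Ioi_of_hasDerivAt_of_tendsto' hderiv
    (by simpa [neg_mul, IntegrableOn] using (exp_neg_integrableOn_Ioi 0 hr).const_mul r) htend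
  simpa using this

private lemma integral_Ioi_comp_add' (g : ℝ → ℝ) (c : ℝ) :
    ∫ x in Ioi (0:ℝ), g (x + c) = ∫ y in Ioi c, g y := by
  rw [← integral_indicator measurableSet_Ioi, ← integral_indicator measurableSet_Ioi,
    ← integral_add_right_eq_self (Set.indicator (Ioi c) g) c]
  congr 1 with x
  simp only [Set.indicator_apply, mem_Ioi, lt_add_iff_pos_left]

private lemma log_shift_integral' {r c : ℝ} (hr : 0 < r) (hc : 0 < c) :
    ∫ x in Ioi (0:ℝ), Real.log (x + c) * (r * Real.exp (-(r * x)))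
      = Real.log c + Real.exp (r * c) * ∫ t in Ioi (r * c), t⁻¹ * Real.exp (-t) := by
  have hderiv : ∀ x ∈ Ici (0:ℝ), HasDerivAt (fun a => -Real.exp (-(r * a)) * Real.log (a + c))
      (Real.log (x + c) * (r * Real.exp (-(r * x))) - Real.exp (-(r * x)) * (x + c)⁻¹) x := by
    intro x hx
    have hx0 : (0:ℝ) ≤ x := hx
    have h1 : HasDerivAt (fun a => -Real.exp (-(r * a))) (r * Real.exp (-(r * x))) x :=
      ProbabilityTheory.hasDerivAt_neg_exp_mul_exp
    have h2 : HasDerivAt (fun a : ℝ => Real.log (a + c)) ((x + c)⁻¹) x := by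
      simpa using ((hasDerivAt_id x).add_const c).log (by positivity)
    exact (h1.fun_mul h2).congr_deriv (by ring)
  have htend : Tendsto (fun a => -Real.exp (-(r * a)) * Real.log (a + c)) atTop (nhds 0) := by
    apply squeeze_zero_norm'
      (a := fun a : ℝ => a * Real.exp (-(r * a)) + c * Real.exp (-(r * a)))
    · filter_upwards [eventually_ge_atTop (max 1 (1 - c))] with a ha
      have ha1 : (1:ℝ) ≤ a := le_trans (le_max_left _ _) ha
      have hac : (1:ℝ) ≤ a + c := by have := le_trans (le_max_right _ _) ha; linarith
      have hlog0 : 0 ≤ Real.log (a + c) := Real.log_nonneg hac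
      have hlog : Real.log (a + c) ≤ a + c := by
        linarith [Real.log_le_sub_one_of_pos (show (0:ℝ) < a + c by linarith)]
      rw [norm_mul, norm_neg, Real.norm_eq_abs, Real.norm_eq_abs,
        abs_of_pos (Real.exp_pos _), abs_of_nonneg hlog0]
      calc Real.exp (-(r * a)) * Real.log (a + c) ≤ Real.exp (-(r * a)) * (a + c) :=
            mul_le_mul_of_nonneg_left hlog (Real.exp_pos _).le
        _ = a * Real.exp (-(r * a)) + c * Real.exp (-(r * a)) := by ring
    · rw [show (0:ℝ) = 0 + c * 0 by ring]
      refine Tendsto.add ?_ (Tendsto.const_mul c ?_)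
      · simpa [Real.rpow_one, neg_mul] using
          tendsto_rpow_mul_exp_neg_mul_atTop_nhds_zero 1 r hr
      · refine Real.tendsto_exp_atBot.comp ?_
        simpa [neg_mul] using
          (tendsto_id.const_mul_atTop hr).const_mul_atTop_of_neg (by norm_num : (-1:ℝ) < 0)
  have hint : IntegrableOn (fun x => Real.log (x + c) * (r * Real.exp (-(r * x)))
      - Real.exp (-(r * x)) * (x + c)⁻¹) (Ioi (0:ℝ)) := (Ilogshift' hr hc).sub (Iinvshift' hr hc)
  have hparts := integral_Ioi_of_hasDerivAt_of_tendsto' hderiv hint htend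
  rw [integral_sub (Ilogshift' hr hc) (Iinvshift' hr hc)] at hparts
  have hF0 : -Real.exp (-(r * 0)) * Real.log (0 + c) = -Real.log c := by simp
  rw [hF0, sub_neg_eq_add, zero_add] at hparts
  have hsub : ∫ x in Ioi (0:ℝ), Real.exp (-(r * x)) * (x + c)⁻¹
      = Real.exp (r * c) * ∫ t in Ioi (r * c), t⁻¹ * Real.exp (-t) := by
    have e1 : ∫ x in Ioi (0:ℝ), Real.exp (-(r * x)) * (x + c)⁻¹
        = Real.exp (r * c) * ∫ x in Ioi (0:ℝ), Real.exp (-(r * (x + c))) * (x + c)⁻¹ := by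
      rw [← MeasureTheory.integral_const_mul]
      refine setIntegral_congr_fun measurableSet_Ioi fun x _ => ?_
      rw [show Real.exp (r * c) * (Real.exp (-(r * (x + c))) * (x + c)⁻¹)
          = Real.exp (r * c) * Real.exp (-(r * (x + c))) * (x + c)⁻¹ by ring, ← Real.exp_add]
      ring_nf
    have e2 : ∫ x in Ioi (0:ℝ), Real.exp (-(r * (x + c))) * (x + c)⁻¹
        = ∫ y in Ioi c, Real.exp (-(r * y)) * y⁻¹ :=
      integral_Ioi_comp_add' (fun y => Real.exp (-(r * y)) * y⁻¹) c
    have e3 : ∫ y in Ioi c, Real.exp (-(r * y)) * y⁻¹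
        = ∫ y in Ioi c, r * ((r * y)⁻¹ * Real.exp (-(r * y))) := by
      refine setIntegral_congr_fun measurableSet_Ioi fun y hy => ?_
      have hy0 : (0:ℝ) < y := lt_trans hc hy
      field_simp
    have e4 : ∫ y in Ioi c, r * ((r * y)⁻¹ * Real.exp (-(r * y)))
        = r * (r⁻¹ * ∫ t in Ioi (r * c), t⁻¹ * Real.exp (-t)) := by
      rw [MeasureTheory.integral_const_mul]
      congr 1
      have := integral_comp_mul_left_Ioi (fun t => t⁻¹ * Real.exp (-t)) c hr
      simpa [smul_eq_mul] using this
    rw [e1, e2, e3, e4]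
    field_simp
  rw [hsub] at hparts
  linarith

private lemma expMeasure_integral' {r : ℝ} (hr : 0 < r) (g : ℝ → ℝ) :
    ∫ x, g x ∂(expMeasure r) = ∫ x in Ioi (0:ℝ), g x * (r * Real.exp (-(r * x))) := by
  have hpdf : expMeasure r = volume.withDensity
      (fun x => ((Real.toNNReal (if 0 ≤ x then r * Real.exp (-(r * x)) else 0) : ℝ≥0)
        : ℝ≥0∞)) := by
    rw [expMeasure, gammaMeasure]
    congr 1
    funext x
    rw [show gammaPDF 1 r x = exponentialPDF r x from rfl, exponentialPDF_eq]
    rfl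
  have hmeas : Measurable fun x : ℝ =>
      Real.toNNReal (if 0 ≤ x then r * Real.exp (-(r * x)) else 0) :=
    (Measurable.ite measurableSet_Ici
      (((measurable_id.const_mul r).neg.exp).const_mul r) measurable_const).real_toNNReal
  rw [hpdf, integral_withDensity_eq_integral_smul hmeas g]
  have hpt : ∀ x : ℝ, (Real.toNNReal (if 0 ≤ x then r * Real.exp (-(r * x)) else 0)) • g x
      = Set.indicator (Ici 0) (fun x => g x * (r * Real.exp (-(r * x)))) x := by
    intro x
    rw [NNReal.smul_def, smul_eq_mul]
    by_cases h : (0:ℝ) ≤ x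
    · rw [if_pos h, Set.indicator_of_mem (show x ∈ Ici (0:ℝ) from h)
        (fun x => g x * (r * Real.exp (-(r * x)))), Real.coe_toNNReal _ (by positivity)]
      ring
    · rw [if_neg h, Set.indicator_of_notMem (show x ∉ Ici (0:ℝ) by simpa using h)
        (fun x => g x * (r * Real.exp (-(r * x))))]
      simp
  rw [integral_congr_ae (ae_of_all _ hpt), integral_indicator measurableSet_Ici,
    integral_Ici_eq_integral_Ioi]

end Aux

/-- Closed form for the expected logarithm of the DPC denominator
`𝔓𝔔(1−α)² + 𝕹(𝔓+α²𝔔)` with `𝔓 = δ²XP̄`, `𝔔 = δ²XQ`, over an exponentially distributed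
`X = |Ĥ|²`; consequently the minimization over `α ∈ [0,1)` reduces to minimizing
`ln(P̄/Q + α²) + e^{κ(α)} E₁(κ(α))`. -/
theorem average_log_dpc_denominator {Ω : Type*} [MeasurableSpace Ω] (μ : Measure Ω)
    [IsProbabilityMeasure μ]
    (s2 δ Pbar Q 𝕹 : ℝ)
    (hs2 : 0 < s2) (hδ : 0 < δ) (hP : 0 < Pbar) (hQ : 0 < Q) (h𝕹 : 0 < 𝕹)
    (X : Ω → ℝ) (hX : Measurable X)
    (hlaw : μ.map X = expMeasure (1 / s2))
    (ρ : ℝ) (hρ : ρ = 𝕹 / (δ ^ 2 * Pbar * s2))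
    (κ : ℝ → ℝ) (hκ : ∀ α, κ α = ρ * (Pbar / Q + α ^ 2) / (1 - α) ^ 2)
    (E1 : ℝ → ℝ) (hE1 : ∀ z, E1 z = ∫ t in Set.Ioi z, t⁻¹ * Real.exp (-t))
    (L : ℝ → ℝ)
    (hL : ∀ α, L α = μ[fun ω => Real.log
      (δ ^ 4 * X ω ^ 2 * Pbar * Q * (1 - α) ^ 2 + 𝕹 * δ ^ 2 * X ω * (Pbar + α ^ 2 * Q))]) :
    (∀ α ∈ Set.Ico (0 : ℝ) 1,
      L α = μ[fun ω => Real.log (X ω)] + Real.log (𝕹 * δ ^ 2 * Q)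
              + Real.log (Pbar / Q + α ^ 2) + Real.exp (κ α) * E1 (κ α)) ∧
    ∀ α ∈ Set.Ico (0 : ℝ) 1, ∀ β ∈ Set.Ico (0 : ℝ) 1,
      (L α ≤ L β ↔
        Real.log (Pbar / Q + α ^ 2) + Real.exp (κ α) * E1 (κ α)
          ≤ Real.log (Pbar / Q + β ^ 2) + Real.exp (κ β) * E1 (κ β)) := by
  have hr : (0:ℝ) < 1 / s2 := by positivity
  set r : ℝ := 1 / s2 with hrdef
  have hmain : ∀ α ∈ Set.Ico (0 : ℝ) 1,
      L α = μ[fun ω => Real.log (X ω)] + Real.log (𝕹 * δ ^ 2 * Q)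
              + Real.log (Pbar / Q + α ^ 2) + Real.exp (κ α) * E1 (κ α) := by
    intro α hα
    obtain ⟨hα0, hα1⟩ := hα
    have h1α : (0:ℝ) < 1 - α := by linarith
    set a : ℝ := δ ^ 4 * Pbar * Q * (1 - α) ^ 2 with hadef
    set b : ℝ := 𝕹 * δ ^ 2 * (Pbar + α ^ 2 * Q) with hbdef
    have ha : 0 < a := by positivity
    have hb : 0 < b := by positivity
    set c : ℝ := b / a with hcdef
    have hc : 0 < c := by positivity
    have hac : a * c = b := by rw [hcdef]; field_simp
    have hKappa : r * c = κ α := by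
      rw [hκ, hρ, hcdef, hadef, hbdef, hrdef]
      field_simp
    set f : ℝ → ℝ := fun x => Real.log
      (δ ^ 4 * x ^ 2 * Pbar * Q * (1 - α) ^ 2 + 𝕹 * δ ^ 2 * x * (Pbar + α ^ 2 * Q)) with hfdef
    have hfmeas : Measurable f := by
      refine Real.measurable_log.comp ?_
      exact ((((measurable_id.pow_const 2).const_mul (δ ^ 4)).mul_const Pbar).mul_const Q
        |>.mul_const ((1 - α) ^ 2)).add
        ((measurable_id.const_mul (𝕹 * δ ^ 2)).mul_const (Pbar + α ^ 2 * Q))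
    have e0 : L α = ∫ x, f x ∂(expMeasure r) := by
      rw [hL α, ← hlaw]
      exact (integral_map hX.aemeasurable hfmeas.aestronglyMeasurable).symm
    have e1 : L α = ∫ x in Set.Ioi (0:ℝ), f x * (r * Real.exp (-(r * x))) :=
      e0.trans (expMeasure_integral' hr f)
    have e2 : ∫ x in Set.Ioi (0:ℝ), f x * (r * Real.exp (-(r * x)))
        = ∫ x in Set.Ioi (0:ℝ), (Real.log x * (r * Real.exp (-(r * x)))
            + (Real.log a * (r * Real.exp (-(r * x)))
              + Real.log (x + c) * (r * Real.exp (-(r * x))))) := by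
      refine setIntegral_congr_fun measurableSet_Ioi fun x hx => ?_
      have hx0 : (0:ℝ) < x := hx
      have key : δ ^ 4 * x ^ 2 * Pbar * Q * (1 - α) ^ 2 + 𝕹 * δ ^ 2 * x * (Pbar + α ^ 2 * Q)
          = a * (x * (x + c)) := by
        have : a * (x * (x + c)) = a * x ^ 2 + (a * c) * x := by ring
        rw [this, hac, hadef, hbdef]
        ring
      rw [hfdef]
      simp only
      rw [key, Real.log_mul ha.ne' (by positivity), Real.log_mul hx0.ne' (by positivity)]
      ring
    have e3 : ∫ x in Set.Ioi (0:ℝ), (Real.log x * (r * Real.exp (-(r * x)))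
            + (Real.log a * (r * Real.exp (-(r * x)))
              + Real.log (x + c) * (r * Real.exp (-(r * x)))))
        = (∫ x in Set.Ioi (0:ℝ), Real.log x * (r * Real.exp (-(r * x))))
          + (Real.log a * 1
            + (Real.log c + Real.exp (r * c) * ∫ t in Set.Ioi (r * c), t⁻¹ * Real.exp (-t))) := by
      have h2 : IntegrableOn (fun x => Real.log a * (r * Real.exp (-(r * x)))) (Set.Ioi (0:ℝ)) :=
        (Ipdf' hr).const_mul (Real.log a)
      have h3 : IntegrableOn (fun x => Real.log (x + c) * (r * Real.exp (-(r * x))))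
          (Set.Ioi (0:ℝ)) := Ilogshift' hr hc
      have hsum : IntegrableOn (fun x => Real.log a * (r * Real.exp (-(r * x)))
          + Real.log (x + c) * (r * Real.exp (-(r * x)))) (Set.Ioi (0:ℝ)) := h2.add h3
      rw [integral_add (Ilogpdf' hr) hsum, integral_add h2 h3,
        MeasureTheory.integral_const_mul, integral_pdf_one' hr, log_shift_integral' hr hc]
    have e4 : μ[fun ω => Real.log (X ω)]
        = ∫ x in Set.Ioi (0:ℝ), Real.log x * (r * Real.exp (-(r * x))) := by
      rw [← expMeasure_integral' hr Real.log, ← hlaw,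
        integral_map hX.aemeasurable Real.measurable_log.aestronglyMeasurable]
    have hE : Real.exp (κ α) * E1 (κ α)
        = Real.exp (r * c) * ∫ t in Set.Ioi (r * c), t⁻¹ * Real.exp (-t) := by
      rw [hE1, ← hKappa]
    have hbsplit : Real.log (𝕹 * δ ^ 2 * Q) + Real.log (Pbar / Q + α ^ 2)
        = Real.log a + Real.log c := by
      rw [← Real.log_mul (by positivity) (by positivity), ← Real.log_mul ha.ne' hc.ne', hac]
      congr 1
      rw [hbdef]
      field_simp
    rw [e4, hE]
    have := e1.trans (e2.trans e3)
    linarith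
  refine ⟨hmain, fun α hα β hβ => ?_⟩
  rw [hmain α hα, hmain β hβ]
  constructor <;> intro h <;> linarith
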